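/- Let a > 0, 0 < aδ < π, x ∈ ℝ, and define d_k(x) = sinh(a(x+k))/(cosh(a(x+k)) + cos(aδ)). Then for each fixed nonzero integer ℓ, lim_{N→∞} ∑_{k=−N}^{N} (d_{k+ℓ}(x) − d_{k−ℓ}(x)) = 4ℓ. -/

import Mathlib

open Real Filter

private lemma ratio_tendsto_top {c : ℝ} (hc : -1 < c) :
    Tendsto (fun u : ℝ => Real.sinh u / (Real.cosh u + c)) atTop (nhds 1) := by
  have h0 : Tendsto (fun u : ℝ => Real.exp (-u)) atTop (nhds 0) :=
    Real.tendsto_exp_atBot.comp tendsto_neg_atTop_atBot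
  have hnum : Tendsto (fun u : ℝ => 1 - Real.exp (-u) * Real.exp (-u)) atTop (nhds 1) := by
    have := (h0.mul h0).const_sub 1
    simpa using this
  have hden : Tendsto (fun u : ℝ => 1 + Real.exp (-u) * Real.exp (-u) + 2 * c * Real.exp (-u))
      atTop (nhds 1) := by
    have := ((h0.mul h0).const_add 1).add (h0.const_mul (2*c))
    simpa using this
  have h := hnum.div hden (by norm_num)
  rw [show (1:ℝ)/1 = 1 by norm_num] at h
  refine h.congr fun u => ?_
  simp only [Pi.div_apply]
  have he := Real.exp_ne_zero u
  have hn : 1 - Real.exp (-u) * Real.exp (-u) = 2 * Real.exp (-u) * Real.sinh u := by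
    rw [Real.sinh_eq, Real.exp_neg]; field_simp
  have hd2 : 1 + Real.exp (-u) * Real.exp (-u) + 2 * c * Real.exp (-u)
      = 2 * Real.exp (-u) * (Real.cosh u + c) := by
    rw [Real.cosh_eq, Real.exp_neg]; field_simp
  rw [hn, hd2, mul_div_mul_left _ _ (by positivity : (2:ℝ) * Real.exp (-u) ≠ 0)]

private lemma ratio_tendsto_bot {c : ℝ} (hc : -1 < c) :
    Tendsto (fun u : ℝ => Real.sinh u / (Real.cosh u + c)) atBot (nhds (-1)) := by
  have h := ((ratio_tendsto_top hc).comp tendsto_neg_atBot_atTop).neg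
  rw [show -(1:ℝ) = -1 by norm_num] at h
  refine h.congr fun u => ?_
  simp [Function.comp, Real.sinh_neg, Real.cosh_neg, neg_div]

private lemma sum_Ioc_split (f : ℤ → ℝ) {a b c : ℤ} (hab : a ≤ b) (hbc : b ≤ c) :
    ∑ k ∈ Finset.Ioc a c, f k = (∑ k ∈ Finset.Ioc a b, f k) + ∑ k ∈ Finset.Ioc b c, f k := by
  rw [← Finset.Ioc_union_Ioc_eq_Ioc hab hbc, Finset.sum_union]
  refine Finset.disjoint_left.2 fun y hy hy' => ?_
  simp only [Finset.mem_Ioc] at hy hy'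
  omega

private lemma telescoping_pos (d : ℤ → ℝ) (h1 : Tendsto d atTop (nhds 1))
    (h2 : Tendsto d atBot (nhds (-1))) (ℓ : ℤ) (hℓ : 0 < ℓ) :
    Tendsto (fun N : ℕ => ∑ k ∈ Finset.Icc (-(N:ℤ)) (N:ℤ), (d (k+ℓ) - d (k-ℓ)))
      atTop (nhds (4*ℓ)) := by
  have hcard : (Finset.Ioc (0:ℤ) (2*ℓ)).card = (2*ℓ).toNat := by
    rw [Int.card_Ioc]; norm_num
  have hcast : (((2*ℓ).toNat : ℕ) : ℝ) = 2*(ℓ:ℝ) := by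
    rw [show (((2*ℓ).toNat : ℕ) : ℝ) = (((2*ℓ).toNat : ℤ) : ℝ) by push_cast; ring,
      Int.toNat_of_nonneg (by positivity : (0:ℤ) ≤ 2*ℓ)]
    push_cast; ring
  have hF1 : Tendsto (fun N : ℕ => ∑ j ∈ Finset.Ioc (0:ℤ) (2*ℓ), d ((N:ℤ) - ℓ + j))
      atTop (nhds (2*ℓ)) := by
    have : Tendsto (fun N : ℕ => ∑ j ∈ Finset.Ioc (0:ℤ) (2*ℓ), d ((N:ℤ) - ℓ + j))
        atTop (nhds (∑ j ∈ Finset.Ioc (0:ℤ) (2*ℓ), (1:ℝ))) := by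
      refine tendsto_finset_sum _ fun j _ => ?_
      refine h1.comp ?_
      have : Tendsto (fun N : ℕ => (N:ℤ)) atTop atTop := tendsto_natCast_atTop_atTop
      exact tendsto_atTop_add_const_right _ _ (tendsto_atTop_add_const_right _ _ this)
    simp only [Finset.sum_const, hcard, nsmul_eq_mul, mul_one] at this
    rwa [hcast] at this
  have hF2 : Tendsto (fun N : ℕ => ∑ j ∈ Finset.Ioc (0:ℤ) (2*ℓ), d (-(N:ℤ) - ℓ - 1 + j))
      atTop (nhds (-(2*ℓ))) := by
    have : Tendsto (fun N : ℕ => ∑ j ∈ Finset.Ioc (0:ℤ) (2*ℓ), d (-(N:ℤ) - ℓ - 1 + j))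
        atTop (nhds (∑ j ∈ Finset.Ioc (0:ℤ) (2*ℓ), (-1:ℝ))) := by
      refine tendsto_finset_sum _ fun j _ => ?_
      refine h2.comp ?_
      have h : Tendsto (fun N : ℕ => -(N:ℤ)) atTop atBot :=
        tendsto_neg_atBot_iff.mpr tendsto_natCast_atTop_atTop
      exact tendsto_atBot_add_const_right _ _
        (tendsto_atBot_add_const_right _ _ (tendsto_atBot_add_const_right _ _ h))
    simp only [Finset.sum_const, hcard, smul_neg, nsmul_eq_mul, mul_one] at this
    rwa [hcast] at this
  have key := hF1.sub hF2
  rw [show (2*(ℓ:ℝ)) - -(2*ℓ) = 4*ℓ by ring] at key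
  refine key.congr' ?_
  filter_upwards [eventually_ge_atTop ℓ.toNat] with N hN
  have hNℓ : ℓ ≤ (N:ℤ) := by omega
  have e1 : ∑ j ∈ Finset.Ioc (0:ℤ) (2*ℓ), d ((N:ℤ) - ℓ + j)
      = ∑ k ∈ Finset.Ioc ((N:ℤ) - ℓ) ((N:ℤ) + ℓ), d k := by
    rw [show Finset.Ioc ((N:ℤ) - ℓ) ((N:ℤ) + ℓ)
        = Finset.map (addLeftEmbedding ((N:ℤ) - ℓ)) (Finset.Ioc 0 (2*ℓ)) by
      rw [Finset.map_add_left_Ioc]; congr 1 <;> ring]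
    rw [Finset.sum_map]
    rfl
  have e2 : ∑ j ∈ Finset.Ioc (0:ℤ) (2*ℓ), d (-(N:ℤ) - ℓ - 1 + j)
      = ∑ k ∈ Finset.Ioc (-(N:ℤ) - ℓ - 1) (ℓ - (N:ℤ) - 1), d k := by
    rw [show Finset.Ioc (-(N:ℤ) - ℓ - 1) (ℓ - (N:ℤ) - 1)
        = Finset.map (addLeftEmbedding (-(N:ℤ) - ℓ - 1)) (Finset.Ioc 0 (2*ℓ)) by
      rw [Finset.map_add_left_Ioc]; congr 1 <;> ring]
    rw [Finset.sum_map]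
    rfl
  rw [e1, e2]
  rw [Finset.sum_sub_distrib]
  have eA : ∑ k ∈ Finset.Icc (-(N:ℤ)) (N:ℤ), d (k + ℓ)
      = ∑ k ∈ Finset.Ioc (ℓ - (N:ℤ) - 1) ((N:ℤ) + ℓ), d k := by
    rw [show Finset.Ioc (ℓ - (N:ℤ) - 1) ((N:ℤ) + ℓ)
        = Finset.map (addRightEmbedding ℓ) (Finset.Icc (-(N:ℤ)) (N:ℤ)) by
      rw [Finset.map_add_right_Icc]; ext k
      simp only [Finset.mem_Ioc, Finset.mem_Icc]; omega]
    rw [Finset.sum_map]; rfl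
  have eB : ∑ k ∈ Finset.Icc (-(N:ℤ)) (N:ℤ), d (k - ℓ)
      = ∑ k ∈ Finset.Ioc (-(N:ℤ) - ℓ - 1) ((N:ℤ) - ℓ), d k := by
    rw [show Finset.Ioc (-(N:ℤ) - ℓ - 1) ((N:ℤ) - ℓ)
        = Finset.map (addRightEmbedding (-ℓ)) (Finset.Icc (-(N:ℤ)) (N:ℤ)) by
      rw [Finset.map_add_right_Icc]; ext k
      simp only [Finset.mem_Ioc, Finset.mem_Icc]; omega]
    rw [Finset.sum_map]
    refine Finset.sum_congr rfl fun k _ => ?_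
    simp [sub_eq_add_neg]
  rw [eA, eB,
    sum_Ioc_split d (show ℓ - (N:ℤ) - 1 ≤ (N:ℤ) - ℓ by omega)
      (show (N:ℤ) - ℓ ≤ (N:ℤ) + ℓ by omega),
    sum_Ioc_split d (show -(N:ℤ) - ℓ - 1 ≤ ℓ - (N:ℤ) - 1 by omega)
      (show ℓ - (N:ℤ) - 1 ≤ (N:ℤ) - ℓ by omega)]
  ring

theorem stmt_11 (a δ x : ℝ) (ha : 0 < a) (hδ : 0 < δ) (haδ : a * δ < π)
    (ℓ : ℤ) (hℓ : ℓ ≠ 0) :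
    let d : ℤ → ℝ := fun k =>
      Real.sinh (a * (x + k)) / (Real.cosh (a * (x + k)) + Real.cos (a * δ))
    Tendsto (fun N : ℕ => ∑ k ∈ Finset.Icc (-(N : ℤ)) (N : ℤ), (d (k + ℓ) - d (k - ℓ)))
      atTop (nhds (4 * ℓ)) := by
  intro d
  have hc : -1 < Real.cos (a * δ) := by
    have h1 : a * δ ∈ Set.Icc 0 π := ⟨by positivity, le_of_lt haδ⟩
    have h2 : (π : ℝ) ∈ Set.Icc 0 π := ⟨Real.pi_pos.le, le_refl _⟩
    have := Real.strictAntiOn_cos h1 h2 haδ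
    rwa [Real.cos_pi] at this
  have hinner_top : Tendsto (fun k : ℤ => a * (x + (k:ℝ))) atTop atTop := by
    apply Tendsto.const_mul_atTop ha
    exact tendsto_atTop_add_const_left _ _ tendsto_intCast_atTop_atTop
  have hinner_bot : Tendsto (fun k : ℤ => a * (x + (k:ℝ))) atBot atBot := by
    apply Tendsto.const_mul_atBot ha
    apply tendsto_atBot_add_const_left
    exact tendsto_intCast_atBot_iff.mpr tendsto_id
  have hd_top : Tendsto d atTop (nhds 1) := (ratio_tendsto_top hc).comp hinner_top
  have hd_bot : Tendsto d atBot (nhds (-1)) := (ratio_tendsto_bot hc).comp hinner_bot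
  rcases lt_or_gt_of_ne hℓ with hneg | hpos
  · have hm : 0 < -ℓ := by omega
    have h := (telescoping_pos d hd_top hd_bot (-ℓ) hm).neg
    rw [show -(4 * ((-ℓ : ℤ) : ℝ)) = 4 * ℓ by push_cast; ring] at h
    refine h.congr fun N => ?_
    rw [← Finset.sum_neg_distrib]
    refine Finset.sum_congr rfl fun k _ => ?_
    have e1 : k + -ℓ = k - ℓ := by ring
    have e2 : k - -ℓ = k + ℓ := by ring
    rw [e1, e2]; ring
  · exact telescoping_pos d hd_top hd_bot ℓ hpos
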